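/- Let k ≥ 2 be an integer and let π be a ranking that occurs as a vote in more than 50% of the total votes of an election. Then π is the unique k-wise median of the election. -/
import Mathlib


open Finset

/-- A ranking (strict total order) of the finite candidate set `C`, encoded as a
bijection with `Fin (Fintype.card C)`; position `0` is the top of the ranking. -/
abbrev Ranking (C : Type*) [Fintype C] := C ≃ Fin (Fintype.card C)

section Defs

variable {C : Type*} [Fintype C] [DecidableEq C]

/-- `x` is ranked (strictly) before `y` in the ranking `π`. -/
def Before (π : Ranking C) (x y : C) : Prop := π x < π y

instance (π : Ranking C) (x y : C) : Decidable (Before π x y) :=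
  inferInstanceAs (Decidable (π x < π y))

instance : DecidableEq (Ranking C) := fun a b =>
  decidable_of_iff (∀ i, a i = b i) Equiv.ext_iff.symm

/-- The top-ranked element of `S ⊆ C` according to `π` (`⊤` if `S = ∅`). -/
def topS (π : Ranking C) (S : Finset C) : WithTop C :=
  (S.image π).min.map (fun i => π.symm i)

/-- The `k`-wise Kendall-tau distance between two rankings: the number of subsets
`S ⊆ C` with `|S| ≤ k` on whose top element the two rankings disagree (subsets of
size at most one never contribute). -/
def kDist (k : ℕ) (π σ : Ranking C) : ℕ :=
  ((Finset.univ : Finset C).powerset.filter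
    (fun S => S.card ≤ k ∧ topS π S ≠ topS σ S)).card

/-- The `k`-wise Kendall-tau distance from a ranking to a voting profile. -/
def kDistV (k : ℕ) (π : Ranking C) (V : Multiset (Ranking C)) : ℕ :=
  (V.map (fun σ => kDist k π σ)).sum

/-- `π` is a `k`-wise median (for `k = 2`: a Kemeny ranking) of the profile `V`. -/
def IsKMedian (k : ℕ) (V : Multiset (Ranking C)) (π : Ranking C) : Prop :=
  ∀ σ : Ranking C, kDistV k π V ≤ kDistV k σ V

/-- The number of votes of `V` in which `x` is ranked before `y`. -/
def votesBefore (V : Multiset (Ranking C)) (x y : C) : ℕ :=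
  Multiset.card (V.filter (fun v => Before v x y))

/-- `x ≥ₛ y` : `x` is ranked before `y` in at least `s·|V|` of the votes. -/
def AtLeastRatio (V : Multiset (Ranking C)) (s : ℝ) (x y : C) : Prop :=
  s * (Multiset.card V : ℝ) ≤ (votesBefore V x y : ℝ)

/-- `x >ₛ y` : `x` is ranked before `y` in more than `s·|V|` of the votes. -/
def MoreThanRatio (V : Multiset (Ranking C)) (s : ℝ) (x y : C) : Prop :=
  s * (Multiset.card V : ℝ) < (votesBefore V x y : ℝ)

noncomputable instance (V : Multiset (Ranking C)) (s : ℝ) (x y : C) :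
    Decidable (AtLeastRatio V s x y) :=
  inferInstanceAs (Decidable (s * (Multiset.card V : ℝ) ≤ (votesBefore V x y : ℝ)))

/-- `x` is a non-dirty candidate w.r.t. threshold `s`. -/
def NonDirty (V : Multiset (Ranking C)) (s : ℝ) (x : C) : Prop :=
  ∀ y : C, y ≠ x → AtLeastRatio V s x y ∨ AtLeastRatio V s y x

/-- `x` is ranked first (is the winner) in the ranking `π`. -/
def RankedFirst (π : Ranking C) (x : C) : Prop :=
  ∀ y : C, y ≠ x → Before π x y

instance (π : Ranking C) (x : C) : Decidable (RankedFirst π x) :=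
  inferInstanceAs (Decidable (∀ y : C, y ≠ x → Before π x y))

end Defs


section Aux

variable {C : Type*} [Fintype C] [DecidableEq C]

lemma ranking_eq_of_lt_iff (π τ : Ranking C) (h : ∀ x y : C, π x < π y ↔ τ x < τ y) :
    π = τ := by
  let e : Fin (Fintype.card C) ≃o Fin (Fintype.card C) :=
    { toEquiv := π.symm.trans τ
      map_rel_iff' := by
        intro a b
        simp only [Equiv.trans_apply, Equiv.coe_fn_mk]
        rw [← not_lt, ← not_lt, not_iff_not, ← h]
        simp }
  have he : e = OrderIso.refl _ := Subsingleton.elim _ _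
  have hfix : ∀ i, τ (π.symm i) = i := fun i => by
    rw [show τ (π.symm i) = e i from rfl, he]; rfl
  have htp : ∀ x, τ x = π x := by
    intro x
    have := hfix (π x)
    rwa [Equiv.symm_apply_apply] at this
  ext x
  exact congrArg Fin.val (htp x).symm

lemma topS_pair (π : Ranking C) {x y : C} (h : π x < π y) :
    topS π {x, y} = (x : WithTop C) := by
  have himg : ({x, y} : Finset C).image π = {π x, π y} := by
    simp [Finset.image_insert]
  have hmin : ({π x, π y} : Finset (Fin (Fintype.card C))).min
      = ((π x : Fin (Fintype.card C)) : WithTop (Fin (Fintype.card C))) := by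
    refine le_antisymm (Finset.min_le (Finset.mem_insert_self _ _)) ?_
    refine Finset.le_min_iff.mpr ?_
    intro c hc
    rcases Finset.mem_insert.mp hc with rfl | hc
    · exact le_refl _
    · rw [Finset.mem_singleton] at hc
      subst hc
      exact WithTop.coe_le_coe.mpr h.le
  rw [topS, himg, hmin]
  simp

lemma sum_map_ite {α : Type*} (s : Multiset α) (p : α → Prop) [DecidablePred p] :
    (s.map (fun a => if p a then 1 else 0)).sum = Multiset.card (s.filter p) := by
  induction s using Multiset.induction with
  | empty => simp
  | cons a s ih => by_cases h : p a <;> simp [h, ih, Nat.add_comm]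

lemma multiset_sum_swap {α β : Type*} (s : Multiset α) (t : Finset β) (f : β → α → ℕ) :
    (s.map (fun a => ∑ b ∈ t, f b a)).sum = ∑ b ∈ t, (s.map (fun a => f b a)).sum := by
  induction s using Multiset.induction with
  | empty => simp
  | cons a s ih => simp [ih, Finset.sum_add_distrib]

lemma kDistV_eq (k : ℕ) (ρ : Ranking C) (V : Multiset (Ranking C)) :
    kDistV k ρ V = ∑ S ∈ (Finset.univ : Finset C).powerset.filter (fun S => S.card ≤ k),
      Multiset.card (V.filter (fun σ => topS ρ S ≠ topS σ S)) := by
  have hk : ∀ σ : Ranking C, kDist k ρ σ =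
      ∑ S ∈ (Finset.univ : Finset C).powerset.filter (fun S => S.card ≤ k),
        (if topS ρ S ≠ topS σ S then 1 else 0) := by
    intro σ
    rw [kDist, ← Finset.filter_filter, Finset.card_filter]
  unfold kDistV
  simp only [hk]
  rw [multiset_sum_swap]
  exact Finset.sum_congr rfl fun S _ => sum_map_ite _ _

end Aux

/-- a ranking occurring in more than 50% of the votes is the unique
`k`-wise median (`k ≥ 2`). -/
theorem stmt6 {C : Type*} [Fintype C] [DecidableEq C]
    (k : ℕ) (hk : 2 ≤ k)
    (V : Multiset (Ranking C)) (hV : V ≠ 0) (π : Ranking C)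
    (hπ : Multiset.card V < 2 * V.count π) :
    IsKMedian k V π ∧ ∀ σ : Ranking C, IsKMedian k V σ → σ = π := by
  classical
  set n := Multiset.card V with hn
  set m := V.count π with hm
  have hmn : m ≤ n := Multiset.count_le_card _ _
  set P := (Finset.univ : Finset C).powerset.filter (fun S => S.card ≤ k) with hP
  have key : ∀ τ : Ranking C, τ ≠ π → kDistV k π V < kDistV k τ V := by
    intro τ hτ
    rw [kDistV_eq, kDistV_eq]
    -- per-subset bounds
    have hle : ∀ S ∈ P,
        Multiset.card (V.filter (fun σ => topS π S ≠ topS σ S)) ≤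
        Multiset.card (V.filter (fun σ => topS τ S ≠ topS σ S)) := by
      intro S _
      by_cases he : topS τ S = topS π S
      · have : (V.filter (fun σ => topS π S ≠ topS σ S)) =
            (V.filter (fun σ => topS τ S ≠ topS σ S)) := by
          apply Multiset.filter_congr
          intro σ _
          rw [he]
        rw [this]
      · -- π-side ≤ n - m
        have h1 : Multiset.card (V.filter (fun σ => topS π S ≠ topS σ S)) ≤ n - m := by
          have hsplit : Multiset.card (V.filter (fun σ => topS π S ≠ topS σ S)) +
              Multiset.card (V.filter (fun σ => ¬ topS π S ≠ topS σ S)) = n := by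
            rw [← Multiset.card_add, Multiset.filter_add_not]
          have hcount : m ≤ Multiset.card (V.filter (fun σ => ¬ topS π S ≠ topS σ S)) := by
            have : V.count π = (V.filter (fun σ => ¬ topS π S ≠ topS σ S)).count π := by
              rw [Multiset.count_filter]
              simp
            rw [hm, this]
            exact Multiset.count_le_card _ _
          omega
        -- τ-side ≥ m
        have h2 : m ≤ Multiset.card (V.filter (fun σ => topS τ S ≠ topS σ S)) := by
          have : V.count π = (V.filter (fun σ => topS τ S ≠ topS σ S)).count π := by
            rw [Multiset.count_filter]
            simp [he]
          rw [hm, this]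
          exact Multiset.count_le_card _ _
        omega
    -- a pair where they differ
    have hex : ∃ x y : C, π x < π y ∧ τ y < τ x := by
      by_contra hcon
      push_neg at hcon
      apply hτ
      symm
      apply ranking_eq_of_lt_iff π τ
      intro x y
      constructor
      · intro hlt
        have hxy : x ≠ y := fun h => by simp [h] at hlt
        exact lt_of_le_of_ne (hcon x y hlt) (fun h => hxy (τ.injective h))
      · intro hlt
        have hxy : x ≠ y := fun h => by simp [h] at hlt
        rcases lt_trichotomy (π x) (π y) with h | h | h
        · exact h
        · exact absurd (π.injective h) hxy
        · exact absurd hlt (not_lt.mpr (hcon y x h))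
    obtain ⟨x, y, hpxy, htyx⟩ := hex
    have hxy : x ≠ y := fun h => by simp [h] at hpxy
    have hSP : ({x, y} : Finset C) ∈ P := by
      rw [hP, Finset.mem_filter, Finset.mem_powerset]
      exact ⟨Finset.subset_univ _, by rw [Finset.card_pair hxy]; exact hk⟩
    have htopπ : topS π {x, y} = (x : WithTop C) := topS_pair π hpxy
    have htopτ : topS τ {x, y} = (y : WithTop C) := by
      rw [Finset.pair_comm]
      exact topS_pair τ htyx
    have hne : topS τ ({x, y} : Finset C) ≠ topS π ({x, y} : Finset C) := by
      rw [htopπ, htopτ]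
      simpa using hxy.symm
    apply Finset.sum_lt_sum hle
    refine ⟨{x, y}, hSP, ?_⟩
    have h1 : Multiset.card (V.filter
        (fun σ => topS π ({x, y} : Finset C) ≠ topS σ ({x, y} : Finset C))) ≤ n - m := by
      have hsplit : Multiset.card (V.filter
            (fun σ => topS π ({x, y} : Finset C) ≠ topS σ ({x, y} : Finset C))) +
          Multiset.card (V.filter
            (fun σ => ¬ topS π ({x, y} : Finset C) ≠ topS σ ({x, y} : Finset C))) = n := by
        rw [← Multiset.card_add, Multiset.filter_add_not]
      have hcount : m ≤ Multiset.card (V.filter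
          (fun σ => ¬ topS π ({x, y} : Finset C) ≠ topS σ ({x, y} : Finset C))) := by
        have : V.count π = (V.filter
            (fun σ => ¬ topS π ({x, y} : Finset C) ≠ topS σ ({x, y} : Finset C))).count π := by
          rw [Multiset.count_filter]
          simp
        rw [hm, this]
        exact Multiset.count_le_card _ _
      omega
    have h2 : m ≤ Multiset.card (V.filter
        (fun σ => topS τ ({x, y} : Finset C) ≠ topS σ ({x, y} : Finset C))) := by
      have : V.count π = (V.filter
          (fun σ => topS τ ({x, y} : Finset C) ≠ topS σ ({x, y} : Finset C))).count π := by
        rw [Multiset.count_filter]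
        simp [hne]
      rw [hm, this]
      exact Multiset.count_le_card _ _
    omega
  constructor
  · intro σ
    by_cases h : σ = π
    · rw [h]
    · exact le_of_lt (key σ h)
  · intro σ hσ
    by_contra hne
    exact absurd (hσ π) (not_le.mpr (key σ hne))
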